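/- Let Ω, Ω_X, Ω_Y be topological spaces and let X : Ω → Ω_X and Y : Ω → Ω_Y be functions. Suppose that X is continuous with respect to the initial topology of Y (i.e. for every open set U ⊆ Ω_X there exists an open set V ⊆ Ω_Y with X⁻¹(U) = Y⁻¹(V)), and that the image X(Ω), equipped with the subspace topology from Ω_X, is a T₀ space. Then there exists a unique continuous function φ : Y(Ω) → Ω_X (where Y(Ω) carries the subspace topology from Ω_Y) such that X(ω) = φ(Y(ω)) for all ω ∈ Ω. -/

import Mathlib

/-- **Topological Doob-Dynkin lemma.** If `X` is continuous with respect to the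
initial topology of `Y`, and the image of `X` (with the subspace topology) is a
T₀ space, then there exists a unique continuous `φ : Y(Ω) → Ω_X` with `X = φ ∘ Y`. -/
theorem topological_doob_dynkin {Ω ΩX ΩY : Type*}
    [TopologicalSpace Ω] [TopologicalSpace ΩX] [TopologicalSpace ΩY]
    (X : Ω → ΩX) (Y : Ω → ΩY)
    (hX : ∀ U : Set ΩX, IsOpen U → ∃ V : Set ΩY, IsOpen V ∧ X ⁻¹' U = Y ⁻¹' V)
    (hT0 : T0Space (Set.range X)) :
    ∃! φ : Set.range Y → ΩX, Continuous φ ∧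
      ∀ ω : Ω, X ω = φ ⟨Y ω, Set.mem_range_self ω⟩ := by
  -- well-definedness
  have hwd : ∀ ω₁ ω₂ : Ω, Y ω₁ = Y ω₂ → X ω₁ = X ω₂ := by
    intro ω₁ ω₂ hY
    have hins : Inseparable (X ω₁) (X ω₂) := by
      rw [inseparable_iff_forall_isOpen]
      intro U hU
      obtain ⟨V, hV, hXV⟩ := hX U hU
      have h1 : (X ω₁ ∈ U) ↔ (Y ω₁ ∈ V) := Set.ext_iff.mp hXV ω₁
      have h2 : (X ω₂ ∈ U) ↔ (Y ω₂ ∈ V) := Set.ext_iff.mp hXV ω₂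
      rw [h1, h2, hY]
    have hins' : Inseparable (⟨X ω₁, Set.mem_range_self ω₁⟩ : Set.range X)
        (⟨X ω₂, Set.mem_range_self ω₂⟩ : Set.range X) :=
      (Topology.IsInducing.subtypeVal.inseparable_iff).mp hins
    have := hins'.eq
    exact congrArg Subtype.val this
  -- define φ
  set φ : Set.range Y → ΩX := fun y => X y.2.choose with hφdef
  have hφspec : ∀ ω : Ω, X ω = φ ⟨Y ω, Set.mem_range_self ω⟩ := by
    intro ω
    exact hwd ω _ (Set.mem_range_self ω).choose_spec.symm |>.symm ▸
      (hwd (Set.mem_range_self (f := Y) ω).choose ω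
        ((Set.mem_range_self (f := Y) ω).choose_spec)).symm
  refine ⟨φ, ⟨?_, hφspec⟩, ?_⟩
  · rw [continuous_def]
    intro U hU
    obtain ⟨V, hV, hXV⟩ := hX U hU
    have : φ ⁻¹' U = Subtype.val ⁻¹' V := by
      ext ⟨y, hy⟩
      have hc := hy.choose_spec
      show hy.choose ∈ X ⁻¹' U ↔ y ∈ V
      rw [Set.ext_iff.mp hXV hy.choose, Set.mem_preimage, hc]
    rw [this]
    exact (hV.preimage continuous_subtype_val)
  · rintro ψ ⟨hψc, hψ⟩
    funext y
    obtain ⟨y, hy⟩ := y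
    obtain ⟨ω, rfl⟩ := hy
    rw [← hψ ω, ← hφspec ω]
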